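/- arXiv:1911.06781 — 4 statements merged into one kernel-verified Lean document; each statement's English description precedes it below -/
import Mathlib

section
/- Let a > -1, a_n = Γ(a+1)Γ(n)/Γ(n+a), and b_n = ∑_{k=1}^n 1/a_k. Then lim_{n→∞} b_n / n^{a+1} = 1/Γ(a+2). -/
open Filter

/-- `a_n = Γ(a+1)Γ(n)/Γ(n+a)`. -/
noncomputable def aseq (a : ℝ) (n : ℕ) : ℝ :=
  Real.Gamma (a + 1) * Real.Gamma n / Real.Gamma ((n : ℝ) + a)

/-- `b_n = ∑_{k=1}^n 1/a_k`. -/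
noncomputable def bseq (a : ℝ) (n : ℕ) : ℝ := ∑ k ∈ Finset.Icc 1 n, (aseq a k)⁻¹

lemma gamma_prod (s : ℝ) (hs : 0 < s) (n : ℕ) :
    Real.Gamma s * ∏ j ∈ Finset.range n, (s + j) = Real.Gamma (s + n) := by
  induction n with
  | zero => simp
  | succ n ih =>
    have hne : s + (n : ℝ) ≠ 0 := by positivity
    rw [Finset.prod_range_succ, ← mul_assoc, ih]
    push_cast
    rw [show s + ((n : ℝ) + 1) = (s + n) + 1 by ring, Real.Gamma_add_one hne]
    ring

lemma bseq_eq (a : ℝ) (ha : -1 < a) (n : ℕ) :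
    bseq a n = Real.Gamma ((n : ℝ) + a + 1) / (Real.Gamma n * Real.Gamma (a + 2)) := by
  have ha1 : (0:ℝ) < a + 1 := by linarith
  have hG1 : Real.Gamma (a + 1) ≠ 0 := (Real.Gamma_pos_of_pos ha1).ne'
  have hG2 : Real.Gamma (a + 2) ≠ 0 := (Real.Gamma_pos_of_pos (by linarith)).ne'
  have hG2eq : Real.Gamma (a + 2) = (a + 1) * Real.Gamma (a + 1) := by
    have := Real.Gamma_add_one (s := a + 1) (by positivity)
    rw [← this]; ring_nf
  induction n with
  | zero => simp [bseq, Real.Gamma_zero]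
  | succ n ih =>
    rw [bseq, Finset.sum_Icc_succ_top (by omega), ← bseq, ih]
    have hinv : (aseq a (n + 1))⁻¹ =
        Real.Gamma ((n : ℝ) + 1 + a) / (Real.Gamma (a + 1) * Real.Gamma (n + 1)) := by
      simp only [aseq]
      push_cast
      rw [inv_div]
    rw [hinv]
    rcases Nat.eq_zero_or_pos n with hn | hn
    · subst hn
      simp only [Nat.cast_zero, Nat.cast_one, zero_add]
      rw [Real.Gamma_zero, Real.Gamma_one]
      have h1 : Real.Gamma (1 + a) = Real.Gamma (a + 1) := by ring_nf
      have h2 : Real.Gamma (1 + a + 1) = Real.Gamma (a + 2) := by ring_nf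
      rw [h1, h2]
      field_simp
      simp
    · have hnpos : (0:ℝ) < n := by exact_mod_cast hn
      have hGn : Real.Gamma (n : ℝ) ≠ 0 := (Real.Gamma_pos_of_pos hnpos).ne'
      have h1 : Real.Gamma ((n : ℝ) + 1) = n * Real.Gamma n :=
        Real.Gamma_add_one hnpos.ne'
      have h2 : Real.Gamma ((n : ℝ) + 1 + a) = Real.Gamma ((n : ℝ) + a + 1) := by ring_nf
      have h3 : Real.Gamma ((n : ℝ) + 1 + a + 1)
          = ((n : ℝ) + a + 1) * Real.Gamma ((n : ℝ) + a + 1) := by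
        have hne : (n : ℝ) + a + 1 ≠ 0 := by nlinarith
        rw [show (n : ℝ) + 1 + a + 1 = ((n : ℝ) + a + 1) + 1 by ring,
          Real.Gamma_add_one hne]
      push_cast
      rw [h1, h2, h3, hG2eq]
      have hGna : Real.Gamma ((n : ℝ) + a + 1) ≠ 0 :=
        (Real.Gamma_pos_of_pos (by nlinarith)).ne'
      field_simp
      ring

/-- With `a > -1`, `b_n / n^{a+1} → 1/Γ(a+2)`. -/
theorem stmt_3 (a : ℝ) (ha : -1 < a) :
    Tendsto (fun n : ℕ => bseq a n / (n : ℝ) ^ (a + 1)) atTop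
      (nhds (1 / Real.Gamma (a + 2))) := by
  have ha1 : (0:ℝ) < a + 1 := by linarith
  have hG1 : Real.Gamma (a + 1) ≠ 0 := (Real.Gamma_pos_of_pos ha1).ne'
  have hG2 : Real.Gamma (a + 2) ≠ 0 := (Real.Gamma_pos_of_pos (by linarith)).ne'
  set c : ℕ → ℝ := fun n => (n : ℝ) ^ (a + 1) * (n.factorial : ℝ) / Real.Gamma ((n : ℝ) + a + 2)
    with hc
  have hcs : ∀ n : ℕ, Real.GammaSeq (a + 1) n = c n * Real.Gamma (a + 1) := by
    intro n
    have hp : ∏ j ∈ Finset.range (n + 1), (a + 1 + (j : ℝ))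
        = Real.Gamma ((n : ℝ) + a + 2) / Real.Gamma (a + 1) := by
      rw [eq_div_iff hG1, mul_comm, gamma_prod (a + 1) ha1 (n + 1)]
      push_cast; ring_nf
    rw [Real.GammaSeq, hp, div_div_eq_mul_div, hc]
    ring
  have hclim : Tendsto c atTop (nhds 1) := by
    have h := (Real.GammaSeq_tendsto_Gamma (a + 1)).div_const (Real.Gamma (a + 1))
    rw [div_self hG1] at h
    refine h.congr fun n => ?_
    rw [hcs n, mul_div_assoc, div_self hG1, mul_one]
  have hcinv : Tendsto (fun n => (c n)⁻¹) atTop (nhds 1) := by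
    simpa using hclim.inv₀ one_ne_zero
  have hfrac : Tendsto (fun n : ℕ => (n : ℝ) / ((n : ℝ) + a + 1)) atTop (nhds 1) := by
    have hat : Tendsto (fun n : ℕ => (n : ℝ) + a + 1) atTop atTop :=
      tendsto_atTop_add_const_right _ _ (tendsto_atTop_add_const_right _ _
        tendsto_natCast_atTop_atTop)
    have h0 : Tendsto (fun n : ℕ => (a + 1) / ((n : ℝ) + a + 1)) atTop (nhds 0) :=
      Tendsto.div_atTop tendsto_const_nhds hat
    have h := (tendsto_const_nhds (x := (1:ℝ)) (f := atTop)).sub h0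
    rw [sub_zero] at h
    refine h.congr' ?_
    filter_upwards [eventually_ge_atTop 1] with n hn
    have hn1 : (1:ℝ) ≤ n := by exact_mod_cast hn
    have hne : (n : ℝ) + a + 1 ≠ 0 := by nlinarith
    field_simp
    ring
  have key := (tendsto_const_nhds (x := 1 / Real.Gamma (a + 2)) (f := atTop)).mul hfrac
  have key2 := key.mul hcinv
  rw [mul_one, mul_one] at key2
  refine key2.congr' ?_
  filter_upwards [eventually_ge_atTop 1] with n hn
  have hn1 : (1:ℝ) ≤ n := by exact_mod_cast hn
  have hn0 : (n : ℝ) ≠ 0 := by linarith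
  have hGn : Real.Gamma (n : ℝ) ≠ 0 := (Real.Gamma_pos_of_pos (by linarith)).ne'
  have hGna : Real.Gamma ((n : ℝ) + a + 1) ≠ 0 :=
    (Real.Gamma_pos_of_pos (by nlinarith)).ne'
  have hnap : (n : ℝ) + a + 1 ≠ 0 := by nlinarith
  have hrp : (n : ℝ) ^ (a + 1) ≠ 0 := (Real.rpow_pos_of_pos (by linarith) _).ne'
  have hfact : (n.factorial : ℝ) = n * Real.Gamma n := by
    rw [← Real.Gamma_nat_eq_factorial, Real.Gamma_add_one hn0]
  have hG3 : Real.Gamma ((n : ℝ) + a + 2) = ((n : ℝ) + a + 1) * Real.Gamma ((n : ℝ) + a + 1) := by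
    rw [show (n : ℝ) + a + 2 = ((n : ℝ) + a + 1) + 1 by ring, Real.Gamma_add_one hnap]
  rw [bseq_eq a ha n]
  simp only [hc]
  rw [hfact, hG3]
  field_simp
end

section
/- Let a < 1/2, a_n = Γ(a+1)Γ(n)/Γ(n+a), and b_n = ∑_{k=1}^n 1/a_k. Then lim_{n→∞} (b_n^2/n^3) ∑_{k=1}^n a_k^2 = 1/((1-2a)(a+1)^2). -/
open Filter

lemma sum_Icc_one_split (f : ℕ → ℝ) {n : ℕ} (hn : 1 ≤ n) :
    ∑ k ∈ Finset.Icc 1 n, f k = f 1 + ∑ k ∈ Finset.Icc 2 n, f k := by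
  have h : Finset.Icc 1 n = insert 1 (Finset.Icc 2 n) := by
    ext x; simp only [Finset.mem_Icc, Finset.mem_insert]; omega
  rw [h, Finset.sum_insert (by simp)]

lemma sum_Ico_shift (f : ℕ → ℝ) (n : ℕ) :
    ∑ i ∈ Finset.Ico 1 n, f (i + 1) = ∑ k ∈ Finset.Icc 2 n, f k := by
  induction n with
  | zero => simp
  | succ n ih =>
    rcases Nat.lt_or_ge n 1 with h | h
    · have h0 : n = 0 := by omega
      subst h0; simp
    · rw [Finset.sum_Ico_succ_top h, ih, Finset.sum_Icc_succ_top (by omega)]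

lemma tendsto_sum_rpow (p : ℝ) (hp : -1 < p) :
    Tendsto (fun n : ℕ => (∑ k ∈ Finset.Icc 1 n, (k : ℝ) ^ p) / (n : ℝ) ^ (p + 1))
      atTop (nhds (1 / (p + 1))) := by
  have hp1 : 0 < p + 1 := by linarith
  have hnn : Tendsto (fun n : ℕ => (n : ℝ) ^ (p + 1)) atTop atTop :=
    (tendsto_rpow_atTop hp1).comp tendsto_natCast_atTop_atTop
  have hinv : Tendsto (fun n : ℕ => ((n : ℝ) ^ (p + 1))⁻¹) atTop (nhds 0) :=
    hnn.inv_tendsto_atTop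
  -- two bounding sequences
  have hE1 : Tendsto (fun n : ℕ => (1 + ((n : ℝ) ^ (p + 1) - 1) / (p + 1)) / (n : ℝ) ^ (p + 1))
      atTop (nhds (1 / (p + 1))) := by
    have : Tendsto (fun n : ℕ => ((n : ℝ) ^ (p + 1))⁻¹ + (1 - ((n : ℝ) ^ (p + 1))⁻¹) / (p + 1))
        atTop (nhds (0 + (1 - 0) / (p + 1))) :=
      hinv.add ((tendsto_const_nhds.sub hinv).div_const _)
    rw [show (0 : ℝ) + (1 - 0) / (p + 1) = 1 / (p + 1) by ring] at this
    refine this.congr' ?_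
    filter_upwards [eventually_ge_atTop 1] with n hn
    have hx : (0 : ℝ) < (n : ℝ) ^ (p + 1) :=
      Real.rpow_pos_of_pos (by exact_mod_cast hn) _
    rw [eq_div_iff hx.ne']
    field_simp
  have hE2 : Tendsto (fun n : ℕ => (((n : ℝ) + 1) ^ (p + 1) - 1) / (p + 1) / (n : ℝ) ^ (p + 1))
      atTop (nhds (1 / (p + 1))) := by
    have h1 : Tendsto (fun n : ℕ => ((1 : ℝ) + (n : ℝ)⁻¹) ^ (p + 1)) atTop (nhds 1) := by
      have : Tendsto (fun n : ℕ => (1 : ℝ) + (n : ℝ)⁻¹) atTop (nhds 1) := by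
        simpa using tendsto_const_nhds.add (tendsto_natCast_atTop_atTop (R := ℝ)).inv_tendsto_atTop
      simpa using this.rpow_const (Or.inl one_ne_zero)
    have : Tendsto (fun n : ℕ =>
        (((1 : ℝ) + (n : ℝ)⁻¹) ^ (p + 1) - ((n : ℝ) ^ (p + 1))⁻¹) / (p + 1))
        atTop (nhds ((1 - 0) / (p + 1))) := (h1.sub hinv).div_const _
    rw [show ((1 : ℝ) - 0) / (p + 1) = 1 / (p + 1) by ring] at this
    refine this.congr' ?_
    filter_upwards [eventually_ge_atTop 1] with n hn
    have hn0 : (0 : ℝ) < n := by exact_mod_cast hn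
    have hx : (0 : ℝ) < (n : ℝ) ^ (p + 1) := Real.rpow_pos_of_pos hn0 _
    have key : ((1 : ℝ) + (n : ℝ)⁻¹) ^ (p + 1) = ((n : ℝ) + 1) ^ (p + 1) / (n : ℝ) ^ (p + 1) := by
      rw [← Real.div_rpow (by positivity) hn0.le]
      congr 1
      field_simp
    rw [key, eq_div_iff hx.ne']
    field_simp
  have hIcc : ∀ n : ℕ, Finset.Icc 1 n = Finset.Ico 1 (n + 1) := fun n =>
    (Finset.Ico_add_one_right_eq_Icc 1 n).symm
  rcases le_or_gt 0 p with hc | hc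
  · -- monotone case
    refine tendsto_of_tendsto_of_tendsto_of_le_of_le' hE1 hE2 ?_ ?_
    · filter_upwards [eventually_ge_atTop 1] with n hn
      have hx : (0 : ℝ) < (n : ℝ) ^ (p + 1) :=
        Real.rpow_pos_of_pos (by exact_mod_cast hn) _
      have mono : MonotoneOn (fun x : ℝ => x ^ p) (Set.Icc ((1 : ℕ) : ℝ) ((n : ℕ) : ℝ)) := by
        intro x hx y hy hxy
        have h1x : (1 : ℝ) ≤ x := by simpa using hx.1
        exact Real.rpow_le_rpow (by linarith) hxy hc
      have key := mono.integral_le_sum_Ico hn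
      rw [integral_rpow (Or.inl hp)] at key
      simp only [Nat.cast_one, Nat.cast_ofNat, Real.one_rpow] at key
      have hrw : ∑ i ∈ Finset.Ico 1 n, (((i + 1 : ℕ) : ℝ)) ^ p
          = ∑ k ∈ Finset.Icc 2 n, ((k : ℕ) : ℝ) ^ p := sum_Ico_shift (fun k => (k : ℝ) ^ p) n
      rw [hrw] at key
      have hsplit := sum_Icc_one_split (fun k => (k : ℝ) ^ p) hn
      have h1 : ((1 : ℕ) : ℝ) ^ p = 1 := by simp
      gcongr
      push_cast at key ⊢
      rw [hsplit]
      simp only [Nat.cast_one, Real.one_rpow]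
      push_cast at key
      linarith
    · filter_upwards [eventually_ge_atTop 1] with n hn
      have hx : (0 : ℝ) < (n : ℝ) ^ (p + 1) :=
        Real.rpow_pos_of_pos (by exact_mod_cast hn) _
      have mono : MonotoneOn (fun x : ℝ => x ^ p)
          (Set.Icc ((1 : ℕ) : ℝ) (((n + 1 : ℕ)) : ℝ)) := by
        intro x hx y hy hxy
        have h1x : (1 : ℝ) ≤ x := by simpa using hx.1
        exact Real.rpow_le_rpow (by linarith) hxy hc
      have key := mono.sum_le_integral_Ico (Nat.le_add_left 1 n)
      rw [integral_rpow (Or.inl hp)] at key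
      simp only [Nat.cast_one, Nat.cast_ofNat, Real.one_rpow] at key
      gcongr
      rw [hIcc n]
      push_cast at key ⊢
      linarith
  · -- antitone case
    refine tendsto_of_tendsto_of_tendsto_of_le_of_le' hE2 hE1 ?_ ?_
    · filter_upwards [eventually_ge_atTop 1] with n hn
      have hx : (0 : ℝ) < (n : ℝ) ^ (p + 1) :=
        Real.rpow_pos_of_pos (by exact_mod_cast hn) _
      have anti : AntitoneOn (fun x : ℝ => x ^ p)
          (Set.Icc ((1 : ℕ) : ℝ) (((n + 1 : ℕ)) : ℝ)) := by
        intro x hx y hy hxy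
        have h1x : (1 : ℝ) ≤ x := by simpa using hx.1
        exact Real.rpow_le_rpow_of_nonpos (by linarith) hxy hc.le
      have key := anti.integral_le_sum_Ico (Nat.le_add_left 1 n)
      rw [integral_rpow (Or.inl hp)] at key
      simp only [Nat.cast_one, Nat.cast_ofNat, Real.one_rpow] at key
      gcongr
      rw [hIcc n]
      push_cast at key ⊢
      linarith
    · filter_upwards [eventually_ge_atTop 1] with n hn
      have hx : (0 : ℝ) < (n : ℝ) ^ (p + 1) :=
        Real.rpow_pos_of_pos (by exact_mod_cast hn) _
      have anti : AntitoneOn (fun x : ℝ => x ^ p) (Set.Icc ((1 : ℕ) : ℝ) ((n : ℕ) : ℝ)) := by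
        intro x hx y hy hxy
        have h1x : (1 : ℝ) ≤ x := by simpa using hx.1
        exact Real.rpow_le_rpow_of_nonpos (by linarith) hxy hc.le
      have key := anti.sum_le_integral_Ico hn
      rw [integral_rpow (Or.inl hp)] at key
      simp only [Nat.cast_one, Nat.cast_ofNat, Real.one_rpow] at key
      have hrw : ∑ i ∈ Finset.Ico 1 n, (((i + 1 : ℕ) : ℝ)) ^ p
          = ∑ k ∈ Finset.Icc 2 n, ((k : ℕ) : ℝ) ^ p := sum_Ico_shift (fun k => (k : ℝ) ^ p) n
      rw [hrw] at key
      have hsplit := sum_Icc_one_split (fun k => (k : ℝ) ^ p) hn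
      gcongr
      rw [hsplit]
      simp only [Nat.cast_one, Real.one_rpow]
      push_cast at key
      linarith

lemma tendsto_sum_div_rpow (p : ℝ) (hp : -1 < p) (c : ℕ → ℝ) (L : ℝ)
    (h : Tendsto (fun k : ℕ => c k / (k : ℝ) ^ p) atTop (nhds L)) :
    Tendsto (fun n : ℕ => (∑ k ∈ Finset.Icc 1 n, c k) / (n : ℝ) ^ (p + 1))
      atTop (nhds (L / (p + 1))) := by
  have hp1 : 0 < p + 1 := by linarith
  set g : ℕ → ℝ := fun k => (k : ℝ) ^ p with hg_def
  set f : ℕ → ℝ := fun k => if k = 0 then 0 else c k - L * (k : ℝ) ^ p with hf_def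
  have hg : 0 ≤ g := fun k => Real.rpow_nonneg (Nat.cast_nonneg k) p
  have hT := tendsto_sum_rpow p hp
  have hnn : Tendsto (fun n : ℕ => (n : ℝ) ^ (p + 1)) atTop atTop :=
    (tendsto_rpow_atTop hp1).comp tendsto_natCast_atTop_atTop
  have hinv : Tendsto (fun n : ℕ => ((n : ℝ) ^ (p + 1))⁻¹) atTop (nhds 0) :=
    hnn.inv_tendsto_atTop
  have hrange : ∀ (u : ℕ → ℝ) (n : ℕ),
      ∑ i ∈ Finset.range (n + 1), u i = u 0 + ∑ k ∈ Finset.Icc 1 n, u k := by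
    intro u n
    induction n with
    | zero => simp
    | succ n ih => rw [Finset.sum_range_succ, ih, Finset.sum_Icc_succ_top (by omega)]; ring
  have hG : Tendsto (fun n : ℕ => (∑ i ∈ Finset.range (n + 1), g i) / (n : ℝ) ^ (p + 1))
      atTop (nhds (1 / (p + 1))) := by
    have : Tendsto (fun n : ℕ =>
        g 0 * ((n : ℝ) ^ (p + 1))⁻¹ + (∑ k ∈ Finset.Icc 1 n, g k) / (n : ℝ) ^ (p + 1))
        atTop (nhds (g 0 * 0 + 1 / (p + 1))) := ((tendsto_const_nhds.mul hinv).add hT)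
    rw [show g 0 * 0 + 1 / (p + 1) = 1 / (p + 1) by ring] at this
    refine this.congr fun n => ?_
    rw [hrange g n]
    ring
  have h'g : Tendsto (fun n : ℕ => ∑ i ∈ Finset.range n, g i) atTop atTop := by
    rw [← tendsto_add_atTop_iff_nat 1]
    have hTinf : Tendsto (fun n : ℕ => ∑ k ∈ Finset.Icc 1 n, g k) atTop atTop := by
      have := hT.pos_mul_atTop (by positivity) hnn
      refine this.congr' ?_
      filter_upwards [eventually_ge_atTop 1] with n hn
      have hx : ((n : ℝ) ^ (p + 1)) ≠ 0 :=
        (Real.rpow_pos_of_pos (by exact_mod_cast hn) _).ne'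
      field_simp
      rfl
    refine (tendsto_atTop_add_const_left atTop (g 0) hTinf).congr fun n => (hrange g n).symm
  have hfg : f =o[atTop] g := by
    have h0 : Tendsto (fun k : ℕ => c k / (k : ℝ) ^ p - L) atTop (nhds 0) := by
      simpa using h.sub_const L
    have h1 : (fun k : ℕ => (c k / (k : ℝ) ^ p - L) * g k) =o[atTop]
        (fun k : ℕ => (1 : ℝ) * g k) :=
      ((Asymptotics.isLittleO_one_iff ℝ).2 h0).mul_isBigO (Asymptotics.isBigO_refl g atTop)
    refine h1.congr' ?_ (Eventually.of_forall fun k => one_mul (g k))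
    filter_upwards [eventually_ge_atTop 1] with k hk
    have hx : ((k : ℝ) ^ p) ≠ 0 :=
      (Real.rpow_pos_of_pos (by exact_mod_cast hk) _).ne'
    simp only [hf_def, hg_def]
    rw [if_neg (by omega)]
    field_simp
  have hsum := (hfg.sum_range hg h'g).comp_tendsto (tendsto_add_atTop_nat 1)
  have hF0 : Tendsto (fun n : ℕ => (∑ i ∈ Finset.range (n + 1), f i) / (n : ℝ) ^ (p + 1))
      atTop (nhds 0) := by
    have hdiv := hsum.tendsto_div_nhds_zero
    have hmul := hdiv.mul hG
    rw [zero_mul] at hmul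
    refine Filter.Tendsto.congr' ?_ hmul
    filter_upwards [eventually_ge_atTop 1] with n hn
    have hpos : 0 < ∑ i ∈ Finset.range (n + 1), g i := by
      have h1mem : (1 : ℕ) ∈ Finset.range (n + 1) := by
        simp only [Finset.mem_range]; omega
      have hle := Finset.single_le_sum (f := g) (fun i _ => hg i) h1mem
      have hg1 : g 1 = 1 := by simp [hg_def]
      linarith
    have hx : ((n : ℝ) ^ (p + 1)) ≠ 0 :=
      (Real.rpow_pos_of_pos (by exact_mod_cast hn) _).ne'
    simp only [Function.comp_apply]
    field_simp
  have hfinal := hF0.add (hT.const_mul L)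
  rw [show (0 : ℝ) + L * (1 / (p + 1)) = L / (p + 1) by ring] at hfinal
  refine Filter.Tendsto.congr' ?_ hfinal
  filter_upwards [eventually_ge_atTop 1] with n hn
  have hsplit : ∑ i ∈ Finset.range (n + 1), f i
      = ∑ k ∈ Finset.Icc 1 n, c k - L * ∑ k ∈ Finset.Icc 1 n, g k := by
    have h0 : f 0 = 0 := by simp [hf_def]
    have hcong : ∀ k ∈ Finset.Icc 1 n, f k = c k - L * g k := by
      intro k hk
      have hk1 := (Finset.mem_Icc.1 hk).1
      simp only [hf_def, hg_def]
      rw [if_neg (by omega)]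
    rw [hrange f n, h0, zero_add, Finset.sum_congr rfl hcong, Finset.sum_sub_distrib,
      ← Finset.mul_sum]
  rw [hsplit]
  ring

set_option maxHeartbeats 1000000 in
lemma gamma_ratio (a : ℝ) (ha : -1 < a) :
    Tendsto (fun n : ℕ => (n : ℝ) ^ a * Real.Gamma n / Real.Gamma ((n : ℝ) + a))
      atTop (nhds 1) := by
  have ha1 : 0 < a + 1 := by linarith
  have hGa : 0 < Real.Gamma (a + 1) := Real.Gamma_pos_of_pos ha1
  -- product formula
  have hprod : ∀ n : ℕ, Real.Gamma (a + 1 + (n + 1 : ℕ))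
      = (∏ j ∈ Finset.range (n + 1), (a + 1 + j)) * Real.Gamma (a + 1) := by
    intro n
    induction n with
    | zero =>
      have e : a + 1 + ((0 + 1 : ℕ) : ℝ) = (a + 1) + 1 := by push_cast; ring
      rw [e, Real.Gamma_add_one (by positivity)]
      simp
    | succ n ih =>
      have : a + 1 + ((n + 1 : ℕ) + 1 : ℕ) = (a + 1 + (n + 1 : ℕ)) + 1 := by push_cast; ring
      rw [this, Real.Gamma_add_one (by positivity), ih]
      conv_rhs => rw [Finset.prod_range_succ]
      ring
  -- Euler limit for a+1
  have hseq := Real.GammaSeq_tendsto_Gamma (a + 1)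
  have hu : Tendsto (fun n : ℕ => (n : ℝ) ^ (a + 1) * Real.Gamma (n + 1)
      / Real.Gamma (a + 1 + (n + 1 : ℕ))) atTop (nhds 1) := by
    have hdiv := hseq.div_const (Real.Gamma (a + 1))
    rw [div_self hGa.ne'] at hdiv
    refine hdiv.congr fun n => ?_
    have hfact : Real.Gamma ((n : ℝ) + 1) = ((Nat.factorial n : ℕ) : ℝ) := Real.Gamma_nat_eq_factorial n
    rw [Real.GammaSeq, hprod n, hfact]
    have hpne : (∏ j ∈ Finset.range (n + 1), (a + 1 + (j : ℝ))) ≠ 0 := by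
      apply Finset.prod_ne_zero_iff.2
      intro j _
      positivity
    field_simp
  -- ratio of quadratics
  have hw : Tendsto (fun n : ℕ => (((n : ℝ) + a + 1) * ((n : ℝ) + a)) / (n : ℝ) ^ 2)
      atTop (nhds 1) := by
    have hinv : Tendsto (fun n : ℕ => ((n : ℝ))⁻¹) atTop (nhds 0) :=
      tendsto_natCast_atTop_atTop.inv_tendsto_atTop
    have : Tendsto (fun n : ℕ => (1 + (a + 1) * (n : ℝ)⁻¹) * (1 + a * (n : ℝ)⁻¹))
        atTop (nhds ((1 + (a + 1) * 0) * (1 + a * 0))) :=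
      (tendsto_const_nhds.add (tendsto_const_nhds.mul hinv)).mul
        (tendsto_const_nhds.add (tendsto_const_nhds.mul hinv))
    rw [show ((1 : ℝ) + (a + 1) * 0) * (1 + a * 0) = 1 by ring] at this
    refine this.congr' ?_
    filter_upwards [eventually_ge_atTop 1] with n hn
    have hn0 : ((n : ℝ)) ≠ 0 := by
      have : (0 : ℝ) < n := by exact_mod_cast hn
      exact this.ne'
    field_simp
    ring
  have := hu.mul hw
  rw [mul_one] at this
  refine this.congr' ?_
  filter_upwards [eventually_ge_atTop 1] with n hn
  have hn0 : (0 : ℝ) < n := by exact_mod_cast hn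
  have hn1 : (1 : ℝ) ≤ n := by exact_mod_cast hn
  have hna : (0 : ℝ) < (n : ℝ) + a := by linarith
  have hna1 : (0 : ℝ) < (n : ℝ) + a + 1 := by linarith
  have hGna : 0 < Real.Gamma ((n : ℝ) + a) := Real.Gamma_pos_of_pos hna
  have hGn1 : Real.Gamma ((n : ℝ) + 1) = n * Real.Gamma n := Real.Gamma_add_one hn0.ne'
  have hGna2 : Real.Gamma (a + 1 + (n + 1 : ℕ))
      = ((n : ℝ) + a + 1) * (((n : ℝ) + a) * Real.Gamma ((n : ℝ) + a)) := by
    have e1 : a + 1 + ((n + 1 : ℕ) : ℝ) = ((n : ℝ) + a + 1) + 1 := by push_cast; ring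
    have e2 : (n : ℝ) + a + 1 = ((n : ℝ) + a) + 1 := by ring
    rw [e1, Real.Gamma_add_one hna1.ne', e2, Real.Gamma_add_one hna.ne']
  have hr : (n : ℝ) ^ (a + 1) = (n : ℝ) ^ a * n := by
    rw [Real.rpow_add hn0, Real.rpow_one]
  rw [hGna2, hGn1, hr]
  field_simp

/-- For `-1 < a < 1/2`, `(b_n² / n³) ∑_{k=1}^n a_k² → 1/((1-2a)(a+1)²)`. -/
theorem stmt_4 (a : ℝ) (ha : -1 < a) (ha2 : a < 1 / 2) :
    Tendsto (fun n : ℕ =>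
        (bseq a n) ^ 2 / (n : ℝ) ^ 3 * ∑ k ∈ Finset.Icc 1 n, (aseq a k) ^ 2)
      atTop (nhds (1 / ((1 - 2 * a) * (a + 1) ^ 2))) := by
  have ha1 : 0 < a + 1 := by linarith
  set c := Real.Gamma (a + 1) with hc_def
  have hc : 0 < c := Real.Gamma_pos_of_pos ha1
  have hv := gamma_ratio a ha
  have h1 : Tendsto (fun n : ℕ => (n : ℝ) ^ a * aseq a n) atTop (nhds c) := by
    have := hv.const_mul c
    rw [mul_one] at this
    refine this.congr fun n => ?_
    simp only [aseq, ← hc_def]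
    ring
  have hsq : Tendsto (fun k : ℕ => (aseq a k) ^ 2 / (k : ℝ) ^ (-(2 * a)))
      atTop (nhds (c ^ 2)) := by
    have hmul : Tendsto (fun n : ℕ => ((n : ℝ) ^ a * aseq a n) ^ 2) atTop (nhds (c ^ 2)) :=
      h1.pow 2
    refine Filter.Tendsto.congr' ?_ hmul
    filter_upwards [eventually_ge_atTop 1] with k hk
    have hk0 : (0 : ℝ) < k := by exact_mod_cast hk
    have e1 : ((k : ℝ) ^ a) ^ 2 = (k : ℝ) ^ (2 * a) := by
      rw [sq, ← Real.rpow_add hk0]; ring_nf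
    have e2 : (k : ℝ) ^ (-(2 * a)) = ((k : ℝ) ^ (2 * a))⁻¹ := by
      rw [Real.rpow_neg hk0.le]
    rw [mul_pow, e1, e2, div_eq_mul_inv, inv_inv]
    ring
  have hS := tendsto_sum_div_rpow (-(2 * a)) (by linarith) (fun k => (aseq a k) ^ 2)
    (c ^ 2) hsq
  have hbinv : Tendsto (fun k : ℕ => (aseq a k)⁻¹ / (k : ℝ) ^ a) atTop (nhds c⁻¹) := by
    have := h1.inv₀ hc.ne'
    refine this.congr fun k => ?_
    rw [mul_inv, div_eq_mul_inv, mul_comm]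
  have hB := tendsto_sum_div_rpow a ha (fun k => (aseq a k)⁻¹) c⁻¹ hbinv
  have hfin := (hB.mul hB).mul hS
  have hval : c⁻¹ / (a + 1) * (c⁻¹ / (a + 1)) * (c ^ 2 / (-(2 * a) + 1))
      = 1 / ((1 - 2 * a) * (a + 1) ^ 2) := by
    have h2a : (0 : ℝ) < 1 - 2 * a := by linarith
    have e : -(2 * a) + 1 = 1 - 2 * a := by ring
    rw [e, div_mul_div_comm, div_mul_div_comm]
    have hone : c⁻¹ * c⁻¹ * c ^ 2 = 1 := by
      rw [sq]
      field_simp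
    rw [hone]
    congr 1
    ring
  rw [hval] at hfin
  refine Filter.Tendsto.congr' ?_ hfin
  filter_upwards [eventually_ge_atTop 1] with n hn
  have hn0 : (0 : ℝ) < n := by exact_mod_cast hn
  have hpow : (n : ℝ) ^ (a + 1) * (n : ℝ) ^ (a + 1) * (n : ℝ) ^ (-(2 * a) + 1)
      = (n : ℝ) ^ 3 := by
    rw [← Real.rpow_add hn0, ← Real.rpow_add hn0]
    rw [show a + 1 + (a + 1) + (-(2 * a) + 1) = ((3 : ℕ) : ℝ) by push_cast; ring]
    rw [Real.rpow_natCast]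
  simp only [bseq]
  rw [div_mul_div_comm, div_mul_div_comm, hpow, sq]
  ring
end

section
/- Let a < 1/2, a_n = Γ(a+1)Γ(n)/Γ(n+a), and b_n = ∑_{k=1}^n 1/a_k with b_0 = 0. Then lim_{n→∞} (b_n/n^3) ∑_{k=1}^n a_k^2 b_{k-1} = 1/((2-a)(a+1)^2). -/
open Filter

lemma lemA (a : ℝ) (ha : -1 < a) (n : ℕ) :
    bseq a n = Real.Gamma ((n:ℝ) + a + 1) / ((a+1) * Real.Gamma (a+1) * Real.Gamma n) := by
  have hGa1 : 0 < Real.Gamma (a+1) := Real.Gamma_pos_of_pos (by linarith)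
  have ha1 : a + 1 ≠ 0 := by linarith
  induction n with
  | zero => simp [bseq, Real.Gamma_zero]
  | succ n ih =>
    have hstep : bseq a (n+1) = bseq a n + (aseq a (n+1))⁻¹ :=
      Finset.sum_Icc_succ_top (by omega) _
    have hinv : (aseq a (n+1))⁻¹
        = Real.Gamma ((n:ℝ) + 1 + a) / (Real.Gamma (a+1) * Real.Gamma ((n:ℝ)+1)) := by
      rw [aseq, inv_div]
      push_cast
      ring_nf
    rcases Nat.eq_zero_or_pos n with hn | hn
    · subst hn
      rw [hstep, hinv]
      simp [bseq, Real.Gamma_one]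
      rw [show (1:ℝ) + a + 1 = (a + 1) + 1 by ring, Real.Gamma_add_one ha1,
        show (1:ℝ) + a = a + 1 by ring]
      field_simp
    · have hn' : (1:ℝ) ≤ n := by exact_mod_cast hn
      have hGn : 0 < Real.Gamma (n:ℝ) := Real.Gamma_pos_of_pos (by linarith)
      have hG1 : Real.Gamma ((n:ℝ)+1) = n * Real.Gamma n := Real.Gamma_add_one (by positivity)
      have hG2 : Real.Gamma ((n:ℝ) + 1 + a + 1) = ((n:ℝ) + 1 + a) * Real.Gamma ((n:ℝ)+1+a) := by
        rw [Real.Gamma_add_one (by linarith)]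
      have hG3 : Real.Gamma ((n:ℝ) + 1 + a) = ((n:ℝ) + a) * Real.Gamma ((n:ℝ)+a) := by
        rw [show (n:ℝ) + 1 + a = ((n:ℝ) + a) + 1 by ring, Real.Gamma_add_one (by linarith)]
      rw [hstep, hinv, ih]
      push_cast
      rw [hG2, hG3, hG1, show (n:ℝ) + a + 1 = (n:ℝ) + 1 + a by ring, hG3]
      field_simp
      ring

lemma lemGa (a : ℝ) : 1 / Real.Gamma a = a / Real.Gamma (a+1) := by
  rcases eq_or_ne a 0 with rfl | h
  · simp [Real.Gamma_zero]
  · rw [Real.Gamma_add_one h]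
    rcases eq_or_ne (Real.Gamma a) 0 with h2 | h2
    · simp [h2]
    · field_simp

lemma lemB (a : ℝ) (ha : -1 < a) (k : ℕ) (hk : 1 ≤ k) :
    aseq a k ^ 2 * bseq a (k-1)
      = (Real.Gamma (a+1) / (a+1)) * (((k:ℝ) - 1) * Real.Gamma k / Real.Gamma ((k:ℝ)+a)) := by
  have hGa1 : 0 < Real.Gamma (a+1) := Real.Gamma_pos_of_pos (by linarith)
  have ha1 : a + 1 ≠ 0 := by linarith
  rcases eq_or_lt_of_le hk with h1 | h2
  · have : k = 1 := h1.symm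
    subst this
    simp [bseq]
  · have hk2 : 2 ≤ k := h2
    have hk2' : (2:ℝ) ≤ k := by exact_mod_cast hk2
    have hcast : ((k-1 : ℕ) : ℝ) = (k:ℝ) - 1 := by
      have : (1:ℕ) ≤ k := hk
      push_cast [this]; ring
    have hb : bseq a (k-1) = Real.Gamma ((k:ℝ) + a) / ((a+1) * Real.Gamma (a+1) * Real.Gamma ((k:ℝ)-1)) := by
      rw [lemA a ha (k-1), hcast, show (k:ℝ) - 1 + a + 1 = (k:ℝ) + a by ring]
    have hGk : Real.Gamma (k:ℝ) = ((k:ℝ)-1) * Real.Gamma ((k:ℝ)-1) := by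
      rw [show (k:ℝ) = ((k:ℝ)-1) + 1 by ring, Real.Gamma_add_one (by linarith)]
      ring_nf
    have hGk1 : 0 < Real.Gamma ((k:ℝ)-1) := Real.Gamma_pos_of_pos (by linarith)
    have hGka : 0 < Real.Gamma ((k:ℝ)+a) := Real.Gamma_pos_of_pos (by linarith)
    rw [aseq, hb, hGk]
    field_simp

lemma lemC (a : ℝ) (ha : -1 < a) (ha2 : a < 1/2) (n : ℕ) :
    ∑ k ∈ Finset.Icc 1 n, ((k:ℝ) - 1) * Real.Gamma k / Real.Gamma ((k:ℝ)+a)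
      = (Real.Gamma ((n:ℝ)+2) / Real.Gamma ((n:ℝ)+a) - 1 / Real.Gamma a) / (2-a)
        - (Real.Gamma ((n:ℝ)+1) / Real.Gamma ((n:ℝ)+a) - 1 / Real.Gamma a) / (1-a) := by
  have h2a : (2:ℝ) - a ≠ 0 := by linarith
  have h1a : (1:ℝ) - a ≠ 0 := by linarith
  induction n with
  | zero => norm_num [Real.Gamma_two, Real.Gamma_one]
  | succ n ih =>
    rw [Finset.sum_Icc_succ_top (by omega), ih]
    rcases Nat.eq_zero_or_pos n with hn | hn
    · subst hn
      have hG1a : 0 < Real.Gamma (a+1) := Real.Gamma_pos_of_pos (by linarith)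
      norm_num [Real.Gamma_one, Real.Gamma_two, lemGa a, show (1:ℝ) + a = a + 1 by ring,
        show (1:ℝ) + 2 = 2 + 1 by ring, Real.Gamma_add_one (two_ne_zero (α := ℝ)), Real.Gamma_two]
      field_simp
      ring
    · have hn' : (1:ℝ) ≤ n := by exact_mod_cast hn
      have hGna : 0 < Real.Gamma ((n:ℝ)+a) := Real.Gamma_pos_of_pos (by linarith)
      have hGn1 : 0 < Real.Gamma ((n:ℝ)+1) := Real.Gamma_pos_of_pos (by linarith)
      have e1 : Real.Gamma ((n:ℝ)+1+a) = ((n:ℝ)+a) * Real.Gamma ((n:ℝ)+a) := by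
        rw [show (n:ℝ)+1+a = ((n:ℝ)+a)+1 by ring, Real.Gamma_add_one (by linarith)]
      have e2 : Real.Gamma ((n:ℝ)+2) = ((n:ℝ)+1) * Real.Gamma ((n:ℝ)+1) := by
        rw [show (n:ℝ)+2 = ((n:ℝ)+1)+1 by ring, Real.Gamma_add_one (by positivity)]
      have e3 : Real.Gamma ((n:ℝ)+3) = ((n:ℝ)+2) * (((n:ℝ)+1) * Real.Gamma ((n:ℝ)+1)) := by
        rw [show (n:ℝ)+3 = ((n:ℝ)+2)+1 by ring, Real.Gamma_add_one (by positivity), e2]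
      have hna : (n:ℝ) + a ≠ 0 := by linarith
      push_cast
      rw [show (n:ℝ)+1+2 = (n:ℝ)+3 by ring, show (n:ℝ)+1+1 = (n:ℝ)+2 by ring, e1, e2, e3]
      field_simp [hna]
      ring

lemma lemR (a : ℝ) (ha : -1 < a) (ha2 : a < 1/2) :
    Tendsto (fun n : ℕ => Real.Gamma ((n:ℝ)+a+1) / Real.Gamma (n:ℝ) / (n:ℝ)^3)
      atTop (nhds 0) := by
  have h0 : Tendsto (fun n : ℕ => 1/(n:ℝ)) atTop (nhds 0) := tendsto_one_div_atTop_nhds_zero_nat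
  have hu : Tendsto (fun n : ℕ => ((n:ℝ)+1)*(n:ℝ)/(n:ℝ)^3) atTop (nhds 0) := by
    have := h0.add (h0.mul h0)
    norm_num at this
    apply this.congr'
    filter_upwards [eventually_ge_atTop 1] with n hn
    have hn' : (n:ℝ) ≠ 0 := by positivity
    field_simp
  apply tendsto_of_tendsto_of_tendsto_of_le_of_le' tendsto_const_nhds hu
  · filter_upwards [eventually_ge_atTop 1] with n hn
    have hn' : (1:ℝ) ≤ n := by exact_mod_cast hn
    have h1 : 0 < Real.Gamma ((n:ℝ)+a+1) := Real.Gamma_pos_of_pos (by linarith)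
    have h2 : 0 < Real.Gamma (n:ℝ) := Real.Gamma_pos_of_pos (by linarith)
    positivity
  · filter_upwards [eventually_ge_atTop 2] with n hn
    have hn' : (2:ℝ) ≤ n := by exact_mod_cast hn
    have h2 : 0 < Real.Gamma (n:ℝ) := Real.Gamma_pos_of_pos (by linarith)
    have hmono : Real.Gamma ((n:ℝ)+a+1) ≤ Real.Gamma ((n:ℝ)+2) := by
      apply Real.Gamma_strictMonoOn_Ici.monotoneOn (Set.mem_Ici.mpr (by linarith))
        (Set.mem_Ici.mpr (by linarith)) (by linarith)
    have e2 : Real.Gamma ((n:ℝ)+2) = ((n:ℝ)+1)*(n:ℝ)*Real.Gamma (n:ℝ) := by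
      rw [show (n:ℝ)+2 = ((n:ℝ)+1)+1 by ring, Real.Gamma_add_one (by positivity),
        show (n:ℝ)+1 = (n:ℝ)+1 by ring, Real.Gamma_add_one (by positivity)]
      ring
    rw [div_div]
    calc Real.Gamma ((n:ℝ)+a+1) / (Real.Gamma (n:ℝ) * (n:ℝ)^3)
        ≤ (((n:ℝ)+1)*(n:ℝ)*Real.Gamma (n:ℝ)) / (Real.Gamma (n:ℝ) * (n:ℝ)^3) := by
          gcongr
          exact hmono.trans_eq e2
      _ = ((n:ℝ)+1)*(n:ℝ)/(n:ℝ)^3 := by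
          have hn0 : (n:ℝ) ≠ 0 := by positivity
          field_simp

lemma lemT1 (a : ℝ) :
    Tendsto (fun n : ℕ => (((n:ℝ)+a)*((n:ℝ)+1)*(n:ℝ))/(n:ℝ)^3) atTop (nhds 1) := by
  have h0 : Tendsto (fun n : ℕ => 1/(n:ℝ)) atTop (nhds 0) := tendsto_one_div_atTop_nhds_zero_nat
  have l1 : Tendsto (fun n : ℕ => (1 + a*(1/(n:ℝ))) * (1 + 1/(n:ℝ))) atTop
      (nhds ((1 + a*0) * (1 + 0))) :=
    (tendsto_const_nhds.add (tendsto_const_nhds.mul h0)).mul (tendsto_const_nhds.add h0)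
  norm_num at l1
  apply l1.congr'
  filter_upwards [eventually_ge_atTop 1] with n hn
  have hn' : (n:ℝ) ≠ 0 := by positivity
  field_simp

lemma lemT2 (a : ℝ) :
    Tendsto (fun n : ℕ => (((n:ℝ)+a)*(n:ℝ))/(n:ℝ)^3) atTop (nhds 0) := by
  have h0 : Tendsto (fun n : ℕ => 1/(n:ℝ)) atTop (nhds 0) := tendsto_one_div_atTop_nhds_zero_nat
  have l1 : Tendsto (fun n : ℕ => (1 + a*(1/(n:ℝ))) * (1/(n:ℝ))) atTop
      (nhds ((1 + a*0) * 0)) :=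
    (tendsto_const_nhds.add (tendsto_const_nhds.mul h0)).mul h0
  norm_num at l1
  apply l1.congr'
  filter_upwards [eventually_ge_atTop 1] with n hn
  have hn' : (n:ℝ) ≠ 0 := by positivity
  field_simp

/-- For `-1 < a < 1/2`, `(b_n / n³) ∑_{k=1}^n a_k² b_{k-1} → 1/((2-a)(a+1)²)`. -/
theorem stmt_5 (a : ℝ) (ha : -1 < a) (ha2 : a < 1 / 2) :
    Tendsto (fun n : ℕ =>
        bseq a n / (n : ℝ) ^ 3 * ∑ k ∈ Finset.Icc 1 n, (aseq a k) ^ 2 * bseq a (k - 1))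
      atTop (nhds (1 / ((2 - a) * (a + 1) ^ 2))) := by
  have h2a : (2:ℝ) - a ≠ 0 := by linarith
  have h1a : (1:ℝ) - a ≠ 0 := by linarith
  have ha1 : a + 1 ≠ 0 := by linarith
  have hGa1 : 0 < Real.Gamma (a+1) := Real.Gamma_pos_of_pos (by linarith)
  set g : ℝ := 1 / Real.Gamma a with hg
  have hT : Tendsto (fun n : ℕ => (1/(a+1)^2) *
      ((((((n:ℝ)+a)*((n:ℝ)+1)*(n:ℝ))/(n:ℝ)^3
          - (Real.Gamma ((n:ℝ)+a+1) / Real.Gamma (n:ℝ) / (n:ℝ)^3) * g)/(2-a))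
        - (((((n:ℝ)+a)*(n:ℝ))/(n:ℝ)^3
          - (Real.Gamma ((n:ℝ)+a+1) / Real.Gamma (n:ℝ) / (n:ℝ)^3) * g)/(1-a))))
      atTop (nhds ((1/(a+1)^2) * (((1 - 0*g)/(2-a)) - ((0 - 0*g)/(1-a))))) :=
    tendsto_const_nhds.mul
      ((((lemT1 a).sub ((lemR a ha ha2).mul tendsto_const_nhds)).div_const _).sub
        (((lemT2 a).sub ((lemR a ha ha2).mul tendsto_const_nhds)).div_const _))
  have hval : (1:ℝ) / ((2 - a) * (a + 1) ^ 2)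
      = (1/(a+1)^2) * (((1 - 0*g)/(2-a)) - ((0 - 0*g)/(1-a))) := by
    field_simp
    ring
  rw [hval]
  apply hT.congr'
  filter_upwards [eventually_ge_atTop 1] with n hn
  have hn' : (1:ℝ) ≤ n := by exact_mod_cast hn
  have hn0 : (n:ℝ) ≠ 0 := by positivity
  have hGn : 0 < Real.Gamma (n:ℝ) := Real.Gamma_pos_of_pos (by linarith)
  have hGna : 0 < Real.Gamma ((n:ℝ)+a) := Real.Gamma_pos_of_pos (by linarith)
  have e1 : Real.Gamma ((n:ℝ)+a+1) = ((n:ℝ)+a) * Real.Gamma ((n:ℝ)+a) :=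
    Real.Gamma_add_one (by linarith)
  have e2' : Real.Gamma ((n:ℝ)+1) = (n:ℝ) * Real.Gamma (n:ℝ) := Real.Gamma_add_one hn0
  have e2 : Real.Gamma ((n:ℝ)+2) = ((n:ℝ)+1) * ((n:ℝ) * Real.Gamma (n:ℝ)) := by
    rw [show (n:ℝ)+2 = ((n:ℝ)+1)+1 by ring, Real.Gamma_add_one (by positivity), e2']
  have hsum : ∑ k ∈ Finset.Icc 1 n, (aseq a k) ^ 2 * bseq a (k - 1)
      = (Real.Gamma (a+1) / (a+1)) *
        ∑ k ∈ Finset.Icc 1 n, ((k:ℝ) - 1) * Real.Gamma k / Real.Gamma ((k:ℝ)+a) := by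
    rw [Finset.mul_sum]
    exact Finset.sum_congr rfl fun k hk => lemB a ha k (Finset.mem_Icc.mp hk).1
  rw [hsum, lemC a ha ha2 n, lemA a ha n, e1, e2, e2']
  field_simp
  ring
end

section
/- Let a < 1/2, a_n = Γ(a+1)Γ(n)/Γ(n+a), and b_n = ∑_{k=1}^n 1/a_k with b_0 = 0. Then lim_{n→∞} (1/n^3) ∑_{k=1}^n a_k^2 b_{k-1}^2 = 1/(3(a+1)^2). -/
open Filter

lemma bseq_closed (a : ℝ) (ha : -1 < a) (n : ℕ) :
    bseq a n = Real.Gamma ((n : ℝ) + 1 + a) / ((a + 1) * Real.Gamma (a + 1) * Real.Gamma n) := by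
  have ha1 : (0:ℝ) < a + 1 := by linarith
  have hG1 : Real.Gamma (a + 1) ≠ 0 := (Real.Gamma_pos_of_pos ha1).ne'
  induction n with
  | zero =>
    simp [bseq, Real.Gamma_zero]
  | succ n ih =>
    have hstep : bseq a (n + 1) = bseq a n + (aseq a (n + 1))⁻¹ := by
      rw [bseq, bseq, Finset.sum_Icc_succ_top (by omega)]
    have hcast : ((n + 1 : ℕ) : ℝ) = (n : ℝ) + 1 := by push_cast; ring
    have hpos : (0:ℝ) < (n : ℝ) + 1 + a := by
      have : (0:ℝ) ≤ n := Nat.cast_nonneg n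
      linarith
    have hGna : Real.Gamma ((n : ℝ) + 1 + a) ≠ 0 := (Real.Gamma_pos_of_pos hpos).ne'
    have hGam2 : Real.Gamma ((n : ℝ) + 1 + 1 + a) = ((n : ℝ) + 1 + a) * Real.Gamma ((n : ℝ) + 1 + a) := by
      rw [show (n : ℝ) + 1 + 1 + a = ((n:ℝ) + 1 + a) + 1 by ring, Real.Gamma_add_one hpos.ne']
    rw [hstep, ih, aseq, hcast, inv_div]
    rcases Nat.eq_zero_or_pos n with hn | hn
    · subst hn
      simp only [Nat.cast_zero, zero_add, Real.Gamma_zero, Real.Gamma_one, mul_zero, zero_div]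
      rw [div_zero, zero_add, show (1:ℝ) + 1 + a = (1 + a) + 1 by ring,
        Real.Gamma_add_one (by linarith : (1:ℝ) + a ≠ 0), show (1:ℝ) + a = a + 1 by ring]
      field_simp
    · have hGn : Real.Gamma (n : ℝ) ≠ 0 := (Real.Gamma_pos_of_pos (by exact_mod_cast hn)).ne'
      have hGn1 : Real.Gamma ((n : ℝ) + 1) = (n : ℝ) * Real.Gamma n :=
        Real.Gamma_add_one (by exact_mod_cast hn.ne')
      rw [hGam2, hGn1]
      have hn0 : (n : ℝ) ≠ 0 := by exact_mod_cast hn.ne'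
      field_simp
      ring

lemma prod_eq (a : ℝ) (ha : -1 < a) (k : ℕ) (hk : 1 ≤ k) :
    aseq a k * bseq a (k - 1) = ((k : ℝ) - 1) / (a + 1) := by
  have ha1 : (0:ℝ) < a + 1 := by linarith
  have hG1 : Real.Gamma (a + 1) ≠ 0 := (Real.Gamma_pos_of_pos ha1).ne'
  obtain ⟨m, rfl⟩ : ∃ m, k = m + 1 := ⟨k - 1, by omega⟩
  have hm1 : m + 1 - 1 = m := by omega
  rw [hm1, bseq_closed a ha m, aseq]
  have hcast : ((m + 1 : ℕ) : ℝ) = (m : ℝ) + 1 := by push_cast; ring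
  rw [hcast]
  rcases Nat.eq_zero_or_pos m with hm | hm
  · subst hm
    simp [Real.Gamma_zero]
  · have hpos : (0:ℝ) < (m : ℝ) + 1 + a := by
      have : (0:ℝ) ≤ m := Nat.cast_nonneg m
      linarith
    have hGma : Real.Gamma ((m : ℝ) + 1 + a) ≠ 0 := (Real.Gamma_pos_of_pos hpos).ne'
    have hGm : Real.Gamma (m : ℝ) ≠ 0 := (Real.Gamma_pos_of_pos (by exact_mod_cast hm)).ne'
    have hGm1 : Real.Gamma ((m : ℝ) + 1) = (m : ℝ) * Real.Gamma m :=
      Real.Gamma_add_one (by exact_mod_cast hm.ne')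
    rw [hGm1]
    field_simp
    ring

lemma sum_sq_range (n : ℕ) :
    ∑ j ∈ Finset.range n, (j : ℝ) ^ 2 = (n : ℝ) * ((n : ℝ) - 1) * (2 * (n : ℝ) - 1) / 6 := by
  induction n with
  | zero => simp
  | succ n ih =>
    rw [Finset.sum_range_succ, ih]
    push_cast
    ring

/-- For `-1 < a < 1/2`, `(1/n³) ∑_{k=1}^n a_k² b_{k-1}² → 1/(3(a+1)²)`. -/
theorem stmt_6 (a : ℝ) (ha : -1 < a) (ha2 : a < 1 / 2) :
    Tendsto (fun n : ℕ =>
        1 / (n : ℝ) ^ 3 * ∑ k ∈ Finset.Icc 1 n, (aseq a k) ^ 2 * (bseq a (k - 1)) ^ 2)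
      atTop (nhds (1 / (3 * (a + 1) ^ 2))) := by
  have ha1 : (0:ℝ) < a + 1 := by linarith
  have ha1' : a + 1 ≠ 0 := ha1.ne'
  have hsum : ∀ n : ℕ, ∑ k ∈ Finset.Icc 1 n, (aseq a k) ^ 2 * (bseq a (k - 1)) ^ 2
      = (n : ℝ) * ((n : ℝ) - 1) * (2 * (n : ℝ) - 1) / (6 * (a + 1) ^ 2) := by
    intro n
    have : ∀ k ∈ Finset.Icc 1 n, (aseq a k) ^ 2 * (bseq a (k - 1)) ^ 2
        = ((k : ℝ) - 1) ^ 2 / (a + 1) ^ 2 := by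
      intro k hk
      rw [← mul_pow, prod_eq a ha k (Finset.mem_Icc.mp hk).1, div_pow]
    rw [Finset.sum_congr rfl this, ← Finset.Ico_add_one_right_eq_Icc, Finset.sum_Ico_eq_sum_range]
    simp only [Nat.add_sub_cancel]
    have : ∀ j ∈ Finset.range n, (((1 + j : ℕ) : ℝ) - 1) ^ 2 / (a + 1) ^ 2
        = (j : ℝ) ^ 2 * ((a + 1) ^ 2)⁻¹ := by
      intro j hj
      push_cast
      ring
    rw [Finset.sum_congr rfl this, ← Finset.sum_mul, sum_sq_range]
    field_simp
  have key : Tendsto (fun n : ℕ => (1 - 1/(n:ℝ)) * (2 - 1/(n:ℝ)) / (6 * (a + 1) ^ 2))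
      atTop (nhds (1 / (3 * (a + 1) ^ 2))) := by
    have h0 : Tendsto (fun n : ℕ => 1/(n:ℝ)) atTop (nhds 0) :=
      tendsto_one_div_atTop_nhds_zero_nat
    have h1 : Tendsto (fun n : ℕ => (1 - 1/(n:ℝ)) * (2 - 1/(n:ℝ)) / (6 * (a + 1) ^ 2))
        atTop (nhds (((1:ℝ) - 0) * (2 - 0) / (6 * (a + 1) ^ 2))) :=
      ((tendsto_const_nhds.sub h0).mul (tendsto_const_nhds.sub h0)).div_const (6 * (a + 1) ^ 2)
    have : ((1:ℝ) - 0) * (2 - 0) / (6 * (a + 1) ^ 2) = 1 / (3 * (a + 1) ^ 2) := by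
      field_simp
      ring
    rwa [this] at h1
  refine key.congr' ?_
  filter_upwards [eventually_ge_atTop 1] with n hn
  have hn0 : (n : ℝ) ≠ 0 := by
    exact_mod_cast (by omega : n ≠ 0)
  rw [hsum n]
  field_simp
end
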